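/- Let r be a positive integer and a, b, Δ real numbers with 0 < Δ < 1/2 and Δ ≤ b − a ≤ 1 − Δ. There exists a 1-periodic function Ψ : ℝ → ℝ such that Ψ(x) = 1 for a + Δ/2 ≤ x ≤ b − Δ/2, Ψ(x) = 0 for b + Δ/2 ≤ x ≤ 1 + a − Δ/2, 0 ≤ Ψ(x) ≤ 1 everywhere, and Ψ has a Fourier expansion Ψ(x) = Σ_{m∈ℤ} a_m e(mx) with a₀ = b − a, |a_m| ≤ 2(b−a), |a_m| ≤ 2/(π|m|), and |a_m| ≤ (2/(π|m|))·(r/(π|m|Δ))^r for all m ≠ 0. -/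

import Mathlib

noncomputable def e (x : ℝ) : ℂ := Complex.exp (2 * Real.pi * Complex.I * x)

open MeasureTheory intervalIntegral Set Function

namespace Vino

variable {a b h : ℝ}

/-- 1-periodic indicator of [a,b) -/
noncomputable def chi (a b : ℝ) (x : ℝ) : ℝ := if Int.fract (x - a) < b - a then 1 else 0

/-- averaging operator -/
noncomputable def sm (h : ℝ) (f : ℝ → ℝ) (x : ℝ) : ℝ := (1/(2*h)) * ∫ t in (x-h)..(x+h), f t

noncomputable def psi (a b h : ℝ) : ℕ → ℝ → ℝ
  | 0 => chi a b
  | (k+1) => sm h (psi a b h k)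

lemma chi_measurable : Measurable (chi a b) := by
  apply Measurable.ite _ measurable_const measurable_const
  exact measurableSet_lt (measurable_fract.comp (measurable_id.sub_const a)) measurable_const

lemma chi_periodic : Periodic (chi a b) 1 := by
  intro x; unfold chi
  have : x + 1 - a = (x - a) + 1 := by ring
  rw [this, Int.fract_add_one]

lemma chi_nonneg (x : ℝ) : 0 ≤ chi a b x := by unfold chi; split <;> norm_num

lemma chi_le_one (x : ℝ) : chi a b x ≤ 1 := by unfold chi; split <;> norm_num

lemma chi_eq_one (hab : b - a < 1) {x : ℝ} (h1 : a ≤ x) (h2 : x < b) : chi a b x = 1 := by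
  unfold chi
  rw [Int.fract_eq_self.2 ⟨by linarith, by linarith⟩]
  exact if_pos (show x - a < b - a by linarith)

lemma chi_eq_zero (hab : 0 ≤ b - a) {x : ℝ} (h1 : b ≤ x) (h2 : x < 1 + a) : chi a b x = 0 := by
  unfold chi
  rw [Int.fract_eq_self.2 ⟨by linarith, by linarith⟩]
  exact if_neg (show ¬ (x - a < b - a) by push_neg; linarith)


section sm
variable {f : ℝ → ℝ}

lemma sm_continuous (hint : ∀ u v, IntervalIntegrable f volume u v) :
    Continuous (sm h f) := by
  have hF : Continuous (fun x => ∫ t in (0:ℝ)..x, f t) :=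
    intervalIntegral.continuous_primitive hint 0
  have key : sm h f = fun x =>
      (1/(2*h)) * ((∫ t in (0:ℝ)..(x+h), f t) - ∫ t in (0:ℝ)..(x-h), f t) := by
    funext x
    unfold sm
    congr 1
    rw [← intervalIntegral.integral_add_adjacent_intervals (hint 0 (x-h)) (hint (x-h) (x+h))]
    ring
  rw [key]
  exact continuous_const.mul ((hF.comp (continuous_id.add continuous_const)).sub
    (hF.comp (continuous_id.sub continuous_const)))

lemma sm_nonneg (hh : 0 < h) (h0 : ∀ x, 0 ≤ f x) (x : ℝ) : 0 ≤ sm h f x :=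
  mul_nonneg (by positivity)
    (intervalIntegral.integral_nonneg (by linarith) fun u _ => h0 u)

lemma sm_le_one (hh : 0 < h) (hint : ∀ u v, IntervalIntegrable f volume u v)
    (h1 : ∀ x, f x ≤ 1) (x : ℝ) : sm h f x ≤ 1 := by
  have hmono : ∫ t in (x-h)..(x+h), f t ≤ ∫ t in (x-h)..(x+h), (1:ℝ) :=
    intervalIntegral.integral_mono_on (by linarith) (hint _ _)
      intervalIntegrable_const (fun u _ => h1 u)
  rw [intervalIntegral.integral_const, smul_eq_mul, mul_one] at hmono
  have h2 : (0:ℝ) < 2*h := by linarith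
  calc sm h f x ≤ (1/(2*h)) * (x + h - (x - h)) := by
        unfold sm
        exact mul_le_mul_of_nonneg_left hmono (by positivity)
    _ = 1 := by field_simp; ring

lemma sm_periodic (hp : Periodic f 1) : Periodic (sm h f) 1 := by
  intro x
  unfold sm
  congr 1
  calc ∫ t in (x+1-h)..(x+1+h), f t = ∫ t in ((x-h)+1)..((x+h)+1), f t := by
        congr 1 <;> ring
    _ = ∫ t in (x-h)..(x+h), f (t+1) := (intervalIntegral.integral_comp_add_right f 1).symm
    _ = ∫ t in (x-h)..(x+h), f t := by
        apply intervalIntegral.integral_congr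
        intro t _
        exact hp t

lemma sm_eq_one (hh : 0 < h) {c d : ℝ} (hae : ∀ᵐ t, t ∈ Icc c d → f t = 1) {x : ℝ}
    (hc : c ≤ x - h) (hd : x + h ≤ d) : sm h f x = 1 := by
  unfold sm
  rw [intervalIntegral.integral_congr_ae (g := fun _ => (1:ℝ)) ?_,
    intervalIntegral.integral_const]
  · rw [smul_eq_mul, mul_one]
    have h2 : (0:ℝ) < 2*h := by linarith
    field_simp
    ring
  · filter_upwards [hae] with t ht hmem
    rw [Set.uIoc_of_le (by linarith : x - h ≤ x + h)] at hmem
    exact ht ⟨by linarith [hmem.1], by linarith [hmem.2]⟩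

lemma sm_eq_zero (hh : 0 < h) {c d : ℝ} (hae : ∀ᵐ t, t ∈ Icc c d → f t = 0) {x : ℝ}
    (hc : c ≤ x - h) (hd : x + h ≤ d) : sm h f x = 0 := by
  unfold sm
  rw [intervalIntegral.integral_congr_ae (g := fun _ => (0:ℝ)) ?_,
    intervalIntegral.integral_const]
  · simp
  · filter_upwards [hae] with t ht hmem
    rw [Set.uIoc_of_le (by linarith : x - h ≤ x + h)] at hmem
    exact ht ⟨by linarith [hmem.1], by linarith [hmem.2]⟩

end sm

/- lemmas about e -/
lemma e_add (x y : ℝ) : e (x + y) = e x * e y := by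
  unfold e
  rw [← Complex.exp_add]
  congr 1
  push_cast
  ring

lemma e_norm (x : ℝ) : ‖e x‖ = 1 := by
  unfold e
  rw [Complex.norm_exp]
  have : (2 * (Real.pi:ℂ) * Complex.I * x).re = 0 := by
    simp [Complex.mul_re, Complex.mul_im]
  rw [this, Real.exp_zero]

lemma e_int (n : ℤ) : e n = 1 := by
  unfold e
  rw [show 2 * (Real.pi:ℂ) * Complex.I * ((n:ℝ):ℂ) = (n:ℂ) * (2 * Real.pi * Complex.I) by
    push_cast; ring]
  exact Complex.exp_int_mul_two_pi_mul_I n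

lemma e_continuous : Continuous (fun x : ℝ => e x) := by
  unfold e
  exact Complex.continuous_exp.comp (by continuity)


/-- bounded measurable functions are interval integrable -/
lemma II {E : Type*} [NormedAddCommGroup E] [MeasurableSpace E] [BorelSpace E]
    [SecondCountableTopology E]
    {g : ℝ → E} {C : ℝ} (hg : Measurable g) (hb : ∀ x, ‖g x‖ ≤ C) (u v : ℝ) :
    IntervalIntegrable g volume u v := by
  constructor <;>
  · refine ⟨hg.aestronglyMeasurable.restrict, ?_⟩
    apply MeasureTheory.HasFiniteIntegral.of_bounded (C := C)
    exact ae_of_all _ hb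

noncomputable def coeff (f : ℝ → ℝ) (m : ℤ) : ℂ := ∫ x in (0:ℝ)..1, e (-(m * x)) * f x

noncomputable def D (h : ℝ) (m : ℤ) : ℂ := ((1/(2*h) : ℝ) : ℂ) * ∫ s in (-h)..h, e (m * s)

lemma D_zero (hh : 0 < h) : D h 0 = 1 := by
  unfold D
  have : ∀ s : ℝ, e (((0:ℤ):ℝ) * s) = 1 := by
    intro s
    norm_num [e]
  simp only [this, intervalIntegral.integral_const, smul_eq_mul, mul_one]
  have h2 : (0:ℝ) < 2*h := by linarith
  have hne : (h:ℂ) ≠ 0 := by exact_mod_cast hh.ne'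
  push_cast
  field_simp
  norm_num [Complex.real_smul]
  ring

lemma D_norm_le_one (hh : 0 < h) (m : ℤ) : ‖D h m‖ ≤ 1 := by
  unfold D
  rw [norm_mul]
  have h1 : ‖∫ s in (-h)..h, e (m * s)‖ ≤ 1 * |h - (-h)| := by
    apply intervalIntegral.norm_integral_le_of_norm_le_const
    intro x _
    rw [e_norm]
  have h2 : (0:ℝ) < 2*h := by linarith
  have h3 : ‖((1/(2*h) : ℝ) : ℂ)‖ = 1/(2*h) := by
    rw [Complex.norm_real, Real.norm_eq_abs, abs_of_pos (by positivity)]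
  rw [h3]
  have h4 : |h - (-h)| = 2*h := by rw [abs_of_pos (by linarith)]; ring
  rw [h4, one_mul] at h1
  calc (1/(2*h)) * ‖∫ s in (-h)..h, e (m * s)‖ ≤ (1/(2*h)) * (2*h) :=
        mul_le_mul_of_nonneg_left h1 (by positivity)
    _ = 1 := by field_simp

lemma e_eq_exp (x : ℝ) : e x = Complex.exp ((2 * Real.pi * Complex.I) * x) := rfl

lemma D_norm_le (hh : 0 < h) {m : ℤ} (hm : m ≠ 0) :
    ‖D h m‖ ≤ 1/(2*h) * (1/(Real.pi * |(m:ℝ)|)) := by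
  have hc : (2 * (Real.pi:ℂ) * Complex.I * m) ≠ 0 := by
    simp [Real.pi_ne_zero, Complex.I_ne_zero, hm]
  have key : (∫ s in (-h)..h, e (m * s)) =
      (Complex.exp ((2 * Real.pi * Complex.I * m) * h) -
       Complex.exp ((2 * Real.pi * Complex.I * m) * ((-h : ℝ) : ℂ))) / (2 * Real.pi * Complex.I * m) := by
    rw [show (fun s : ℝ => e ((m:ℝ) * s)) = fun s : ℝ =>
        Complex.exp ((2 * Real.pi * Complex.I * m) * s) by
      funext s; rw [e_eq_exp]; congr 1; push_cast; ring]
    exact integral_exp_mul_complex hc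
  unfold D
  rw [key, norm_mul, norm_div]
  have hnc : ‖(2 * (Real.pi:ℂ) * Complex.I * m)‖ = 2 * Real.pi * |(m:ℝ)| := by
    simp [norm_mul, Complex.norm_real, Real.norm_eq_abs, abs_of_pos Real.pi_pos,
      Complex.norm_intCast]
  have hnum : ‖Complex.exp ((2 * Real.pi * Complex.I * m) * h) -
      Complex.exp ((2 * Real.pi * Complex.I * m) * ((-h : ℝ) : ℂ))‖ ≤ 2 := by
    apply le_trans (norm_sub_le _ _)
    have e1 : ‖Complex.exp ((2 * Real.pi * Complex.I * m) * h)‖ = 1 := by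
      rw [show (2 * (Real.pi:ℂ) * Complex.I * m) * h = 2 * Real.pi * Complex.I * ((m:ℝ)*h : ℝ) by
        push_cast; ring, ← e_eq_exp, e_norm]
    have e2 : ‖Complex.exp ((2 * Real.pi * Complex.I * m) * ((-h : ℝ) : ℂ))‖ = 1 := by
      rw [show (2 * (Real.pi:ℂ) * Complex.I * m) * ((-h : ℝ) : ℂ) = 2 * Real.pi * Complex.I * ((m:ℝ)*(-h) : ℝ) by
        push_cast; ring, ← e_eq_exp, e_norm]
    rw [e1, e2]; norm_num
  have hmpos : (0:ℝ) < |(m:ℝ)| := by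
    simp only [abs_pos]
    exact_mod_cast hm
  have h3 : ‖((1/(2*h) : ℝ) : ℂ)‖ = 1/(2*h) := by
    rw [Complex.norm_real, Real.norm_eq_abs, abs_of_pos (by positivity)]
  rw [h3, hnc]
  calc (1/(2*h)) * (‖Complex.exp ((2 * Real.pi * Complex.I * m) * h) -
      Complex.exp ((2 * Real.pi * Complex.I * m) * ((-h : ℝ) : ℂ))‖ / (2 * Real.pi * |(m:ℝ)|))
      ≤ (1/(2*h)) * (2 / (2 * Real.pi * |(m:ℝ)|)) := by gcongr
    _ = 1/(2*h) * (1/(Real.pi * |(m:ℝ)|)) := by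
        rw [show 2 / (2 * Real.pi * |(m:ℝ)|) = 1/(Real.pi * |(m:ℝ)|) by
          rw [div_eq_div_iff (by positivity) (by positivity)]; ring]


lemma coeff_sm (hh : 0 < h) {f : ℝ → ℝ} (hf : Measurable f)
    (h0 : ∀ x, 0 ≤ f x) (h1 : ∀ x, f x ≤ 1) (hp : Periodic f 1) (m : ℤ) :
    coeff (sm h f) m = D h m * coeff f m := by
  have hb : ∀ x, ‖(f x : ℂ)‖ ≤ 1 := fun x => by
    rw [Complex.norm_real, Real.norm_eq_abs, abs_of_nonneg (h0 x)]; exact h1 x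
  set G : ℝ → ℝ → ℂ := fun x s => e (-((m:ℝ)*x)) * (f (s+x) : ℂ) with hG
  have hGmeas : Measurable (Function.uncurry G) := by
    apply Measurable.mul
    · exact e_continuous.measurable.comp ((measurable_fst.const_mul ((m:ℝ))).neg)
    · exact Complex.measurable_ofReal.comp (hf.comp (measurable_snd.add measurable_fst))
  haveI fin1 : IsFiniteMeasure (volume.restrict (Ioc (0:ℝ) 1)) :=
    ⟨by rw [Measure.restrict_apply MeasurableSet.univ, Set.univ_inter]; exact measure_Ioc_lt_top⟩
  haveI fin2 : IsFiniteMeasure (volume.restrict (Ioc (-h) h)) :=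
    ⟨by rw [Measure.restrict_apply MeasurableSet.univ, Set.univ_inter]; exact measure_Ioc_lt_top⟩
  have hGint : Integrable (Function.uncurry G)
      ((volume.restrict (Ioc (0:ℝ) 1)).prod (volume.restrict (Ioc (-h) h))) := by
    constructor
    · exact hGmeas.aestronglyMeasurable
    · apply MeasureTheory.HasFiniteIntegral.of_bounded (C := 1)
      apply ae_of_all
      rintro ⟨x, s⟩
      show ‖G x s‖ ≤ 1
      rw [hG]
      simp only []
      rw [norm_mul, e_norm, one_mul]
      exact hb _
  -- pointwise identity for the integrand of coeff (sm h f)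
  have step1 : ∀ x : ℝ, e (-((m:ℝ)*x)) * ((sm h f x : ℝ) : ℂ)
      = ((1/(2*h):ℝ):ℂ) * ∫ s in (-h)..h, G x s := by
    intro x
    have c1 : ((sm h f x : ℝ) : ℂ) = ((1/(2*h):ℝ):ℂ) * ∫ t in (x-h)..(x+h), (f t : ℂ) := by
      unfold sm
      rw [intervalIntegral.integral_ofReal]
      push_cast
      ring
    have c2 : (∫ t in (x-h)..(x+h), (f t : ℂ)) = ∫ s in (-h)..h, (f (s+x) : ℂ) := by
      rw [intervalIntegral.integral_comp_add_right (fun t => (f t : ℂ)) x]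
      congr 1 <;> ring
    rw [c1, c2]
    rw [show e (-((m:ℝ)*x)) * (((1/(2*h):ℝ):ℂ) * ∫ s in (-h)..h, (f (s+x) : ℂ))
        = ((1/(2*h):ℝ):ℂ) * (e (-((m:ℝ)*x)) * ∫ s in (-h)..h, (f (s+x) : ℂ)) by ring]
    rw [← intervalIntegral.integral_const_mul]
  -- inner integral evaluation after swapping
  have per : Periodic (fun u : ℝ => e (-((m:ℝ)*u)) * (f u : ℂ)) 1 := by
    intro u
    have h3 : e (-((m:ℝ)*(u+1))) = e (-((m:ℝ)*u)) * e (((-m : ℤ) : ℝ)) := by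
      rw [← e_add]; congr 1; push_cast; ring
    simp only [h3, e_int, mul_one, hp u]
  have inner : ∀ s : ℝ, (∫ x in (0:ℝ)..1, G x s) = e ((m:ℝ)*s) * coeff f m := by
    intro s
    have key : ∀ x : ℝ, G x s = e ((m:ℝ)*s) * (e (-((m:ℝ)*(x+s))) * (f (x+s) : ℂ)) := by
      intro x
      have h4 : e ((m:ℝ)*s) * e (-((m:ℝ)*(x+s))) = e (-((m:ℝ)*x)) := by
        rw [← e_add]; congr 1; ring
      rw [hG]
      simp only []
      rw [show s + x = x + s by ring, ← h4]
      ring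
    rw [intervalIntegral.integral_congr (g := fun x => e ((m:ℝ)*s) *
        (e (-((m:ℝ)*(x+s))) * (f (x+s) : ℂ))) (fun x _ => key x)]
    rw [intervalIntegral.integral_const_mul]
    congr 1
    rw [intervalIntegral.integral_comp_add_right (fun u => e (-((m:ℝ)*u)) * (f u : ℂ)) s]
    have h5 := per.intervalIntegral_add_eq (0+s) 0
    unfold coeff
    rw [show (1:ℝ) + s = 0 + s + 1 by ring]
    rw [show (0:ℝ) + s = s by ring] at h5 ⊢
    rw [h5]
    norm_num
  -- main computation
  have conv1 : ∀ x : ℝ, (∫ s in (-h)..h, G x s) = ∫ s in Ioc (-h) h, G x s :=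
    fun x => intervalIntegral.integral_of_le (by linarith)
  have conv2 : ∀ s : ℝ, (∫ x in (0:ℝ)..1, G x s) = ∫ x in Ioc (0:ℝ) 1, G x s :=
    fun s => intervalIntegral.integral_of_le (by norm_num)
  calc coeff (sm h f) m
      = ∫ x in (0:ℝ)..1, ((1/(2*h):ℝ):ℂ) * ∫ s in (-h)..h, G x s := by
        unfold coeff
        exact intervalIntegral.integral_congr (fun x _ => step1 x)
    _ = ((1/(2*h):ℝ):ℂ) * ∫ x in (0:ℝ)..1, ∫ s in (-h)..h, G x s :=
        intervalIntegral.integral_const_mul _ _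
    _ = ((1/(2*h):ℝ):ℂ) * ∫ s in (-h)..h, ∫ x in (0:ℝ)..1, G x s := by
        congr 1
        rw [intervalIntegral.integral_of_le (by norm_num : (0:ℝ) ≤ 1),
            intervalIntegral.integral_of_le (by linarith : -h ≤ h)]
        simp_rw [conv1, conv2]
        exact MeasureTheory.integral_integral_swap hGint
    _ = ((1/(2*h):ℝ):ℂ) * ∫ s in (-h)..h, (e ((m:ℝ)*s) * coeff f m) := by
        congr 1
        exact intervalIntegral.integral_congr (fun s _ => inner s)
    _ = ((1/(2*h):ℝ):ℂ) * ((∫ s in (-h)..h, e ((m:ℝ)*s)) * coeff f m) := by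
        rw [intervalIntegral.integral_mul_const]
    _ = D h m * coeff f m := by unfold D; ring


lemma ae_ne (b : ℝ) : ∀ᵐ t : ℝ, t ≠ b := by
  have hs : {t : ℝ | ¬ t ≠ b} = {b} := by ext t; simp
  rw [MeasureTheory.ae_iff, hs]
  exact measure_singleton b

lemma coeff_chi_eq (h0 : 0 < b - a) (h1 : b - a < 1) (m : ℤ) :
    coeff (chi a b) m = ∫ x in a..b, e (-((m:ℝ)*x)) := by
  set g : ℝ → ℂ := fun x => e (-((m:ℝ)*x)) * (chi a b x : ℂ) with hg
  have hper : Periodic g 1 := by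
    intro u
    have h3 : e (-((m:ℝ)*(u+1))) = e (-((m:ℝ)*u)) * e (((-m : ℤ) : ℝ)) := by
      rw [← e_add]; congr 1; push_cast; ring
    rw [hg]
    simp only [h3, e_int, mul_one, chi_periodic u]
  have hgm : Measurable g :=
    (e_continuous.measurable.comp ((measurable_id.const_mul ((m:ℝ))).neg)).mul
      (Complex.measurable_ofReal.comp chi_measurable)
  have hgb : ∀ x, ‖g x‖ ≤ 1 := by
    intro x
    rw [hg]
    simp only []
    rw [norm_mul, e_norm, one_mul, Complex.norm_real, Real.norm_eq_abs]
    rw [abs_of_nonneg (chi_nonneg x)]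
    exact chi_le_one x
  have split : coeff (chi a b) m = (∫ x in a..b, g x) + ∫ x in b..(a+1), g x := by
    unfold coeff
    have h4 := hper.intervalIntegral_add_eq a 0
    rw [show (0:ℝ) + 1 = 1 by ring] at h4
    rw [← h4]
    exact (intervalIntegral.integral_add_adjacent_intervals
      (II hgm hgb a b) (II hgm hgb b (a+1))).symm
  have part1 : (∫ x in a..b, g x) = ∫ x in a..b, e (-((m:ℝ)*x)) := by
    apply intervalIntegral.integral_congr_ae
    filter_upwards [ae_ne b] with t ht hmem
    rw [Set.uIoc_of_le (by linarith : a ≤ b)] at hmem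
    rw [hg]
    simp only []
    rw [chi_eq_one h1 (le_of_lt hmem.1) (lt_of_le_of_ne hmem.2 ht)]
    norm_num
  have part2 : (∫ x in b..(a+1), g x) = 0 := by
    rw [show (∫ x in b..(a+1), g x) = ∫ x in b..(a+1), (0:ℂ) from ?_]
    · simp
    apply intervalIntegral.integral_congr_ae
    filter_upwards [ae_ne (a+1)] with t ht hmem
    rw [Set.uIoc_of_le (by linarith : b ≤ a+1)] at hmem
    rw [hg]
    simp only []
    rw [chi_eq_zero (le_of_lt h0) (le_of_lt hmem.1)
      (by rw [show (1:ℝ) + a = a + 1 by ring]; exact lt_of_le_of_ne hmem.2 ht)]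
    norm_num
  rw [split, part1, part2, add_zero]

lemma coeff_chi_zero (h0 : 0 < b - a) (h1 : b - a < 1) :
    coeff (chi a b) 0 = ((b - a : ℝ) : ℂ) := by
  rw [coeff_chi_eq h0 h1]
  have : ∀ x : ℝ, e (-(((0:ℤ):ℝ)*x)) = 1 := by intro x; norm_num [e]
  simp only [this, intervalIntegral.integral_const]
  rw [Complex.real_smul, mul_one]

lemma coeff_chi_norm_le (h0 : 0 < b - a) (h1 : b - a < 1) (m : ℤ) :
    ‖coeff (chi a b) m‖ ≤ b - a := by
  rw [coeff_chi_eq h0 h1]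
  have := intervalIntegral.norm_integral_le_of_norm_le_const
    (C := 1) (f := fun x : ℝ => e (-((m:ℝ)*x))) (a := a) (b := b)
    (fun x _ => le_of_eq (e_norm _))
  rw [one_mul, abs_of_pos (by linarith : (0:ℝ) < b - a)] at this
  exact this

lemma coeff_chi_norm_le' (h0 : 0 < b - a) (h1 : b - a < 1) {m : ℤ} (hm : m ≠ 0) :
    ‖coeff (chi a b) m‖ ≤ 1/(Real.pi * |(m:ℝ)|) := by
  rw [coeff_chi_eq h0 h1]
  have hc : (-(2 * (Real.pi:ℂ) * Complex.I * m)) ≠ 0 := by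
    simp [Real.pi_ne_zero, Complex.I_ne_zero, hm]
  have key : (∫ x in a..b, e (-((m:ℝ)*x))) =
      (Complex.exp ((-(2 * Real.pi * Complex.I * m)) * b) -
       Complex.exp ((-(2 * Real.pi * Complex.I * m)) * a)) / (-(2 * Real.pi * Complex.I * m)) := by
    rw [show (fun x : ℝ => e (-((m:ℝ) * x))) = fun x : ℝ =>
        Complex.exp ((-(2 * Real.pi * Complex.I * m)) * x) by
      funext x; rw [e_eq_exp]; congr 1; push_cast; ring]
    exact integral_exp_mul_complex hc
  rw [key, norm_div]
  have hnc : ‖(-(2 * (Real.pi:ℂ) * Complex.I * m))‖ = 2 * Real.pi * |(m:ℝ)| := by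
    simp [norm_mul, Complex.norm_real, Real.norm_eq_abs, abs_of_pos Real.pi_pos]
  have hnum : ‖Complex.exp ((-(2 * Real.pi * Complex.I * m)) * b) -
      Complex.exp ((-(2 * Real.pi * Complex.I * m)) * a)‖ ≤ 2 := by
    apply le_trans (norm_sub_le _ _)
    have e1 : ‖Complex.exp ((-(2 * Real.pi * Complex.I * m)) * b)‖ = 1 := by
      rw [show (-(2 * (Real.pi:ℂ) * Complex.I * m)) * b = 2 * Real.pi * Complex.I * ((-(m:ℝ))*b : ℝ) by
        push_cast; ring, ← e_eq_exp, e_norm]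
    have e2 : ‖Complex.exp ((-(2 * Real.pi * Complex.I * m)) * a)‖ = 1 := by
      rw [show (-(2 * (Real.pi:ℂ) * Complex.I * m)) * a = 2 * Real.pi * Complex.I * ((-(m:ℝ))*a : ℝ) by
        push_cast; ring, ← e_eq_exp, e_norm]
    rw [e1, e2]; norm_num
  have hmpos : (0:ℝ) < |(m:ℝ)| := by
    simp only [abs_pos]
    exact_mod_cast hm
  rw [hnc]
  calc ‖Complex.exp ((-(2 * Real.pi * Complex.I * m)) * b) -
      Complex.exp ((-(2 * Real.pi * Complex.I * m)) * a)‖ / (2 * Real.pi * |(m:ℝ)|)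
      ≤ 2 / (2 * Real.pi * |(m:ℝ)|) := by gcongr
    _ = 1/(Real.pi * |(m:ℝ)|) := by
        rw [div_eq_div_iff (by positivity) (by positivity)]; ring


lemma psi_pack (a b : ℝ) (hh : 0 < h) : ∀ k : ℕ, Measurable (psi a b h k) ∧
    (∀ u v, IntervalIntegrable (psi a b h k) volume u v) ∧
    (∀ x, 0 ≤ psi a b h k x) ∧ (∀ x, psi a b h k x ≤ 1) ∧
    Periodic (psi a b h k) 1
  | 0 => by
    refine ⟨chi_measurable, ?_, chi_nonneg, chi_le_one, chi_periodic⟩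
    intro u v
    apply II chi_measurable (C := 1) (fun x => ?_) u v
    rw [Real.norm_eq_abs, abs_of_nonneg (chi_nonneg x)]
    exact chi_le_one x
  | (k+1) => by
    obtain ⟨hm, hi, h0, h1, hp⟩ := psi_pack a b hh k
    have hc : Continuous (psi a b h (k+1)) := sm_continuous hi
    exact ⟨hc.measurable, fun u v => hc.intervalIntegrable u v,
      fun x => sm_nonneg hh h0 x, fun x => sm_le_one hh hi h1 x, sm_periodic hp⟩

lemma psi_continuous (a b : ℝ) (hh : 0 < h) (k : ℕ) : Continuous (psi a b h (k+1)) :=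
  sm_continuous (psi_pack a b hh k).2.1

lemma psi_one (hh : 0 < h) (hab1 : b - a < 1) :
    ∀ k : ℕ, (∀ᵐ t : ℝ, t ∈ Icc (a + k*h) (b - k*h) → psi a b h k t = 1) ∧
      (0 < k → ∀ x ∈ Icc (a + k*h) (b - k*h), psi a b h k x = 1)
  | 0 => by
    constructor
    · filter_upwards [ae_ne b] with t ht hmem
      simp only [Nat.cast_zero, zero_mul, add_zero, sub_zero] at hmem
      exact chi_eq_one hab1 hmem.1 (lt_of_le_of_ne hmem.2 ht)
    · intro hk; exact absurd hk (lt_irrefl 0)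
  | (k+1) => by
    obtain ⟨hae, _⟩ := psi_one hh hab1 k
    have hpt : ∀ x ∈ Icc (a + (k+1:ℕ)*h) (b - (k+1:ℕ)*h), psi a b h (k+1) x = 1 := by
      intro x hx
      show sm h (psi a b h k) x = 1
      apply sm_eq_one hh hae
      · have := hx.1; push_cast at this ⊢; linarith
      · have := hx.2; push_cast at this ⊢; linarith
    exact ⟨ae_of_all _ hpt, fun _ => hpt⟩

lemma psi_zero (hh : 0 < h) (hab0 : 0 < b - a) :
    ∀ k : ℕ, (∀ᵐ t : ℝ, t ∈ Icc (b + k*h) (1 + a - k*h) → psi a b h k t = 0) ∧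
      (0 < k → ∀ x ∈ Icc (b + k*h) (1 + a - k*h), psi a b h k x = 0)
  | 0 => by
    constructor
    · filter_upwards [ae_ne (1+a)] with t ht hmem
      simp only [Nat.cast_zero, zero_mul, add_zero, sub_zero] at hmem
      exact chi_eq_zero (le_of_lt hab0) hmem.1 (lt_of_le_of_ne hmem.2 ht)
    · intro hk; exact absurd hk (lt_irrefl 0)
  | (k+1) => by
    obtain ⟨hae, _⟩ := psi_zero hh hab0 k
    have hpt : ∀ x ∈ Icc (b + (k+1:ℕ)*h) (1 + a - (k+1:ℕ)*h), psi a b h (k+1) x = 0 := by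
      intro x hx
      show sm h (psi a b h k) x = 0
      apply sm_eq_zero hh hae
      · have := hx.1; push_cast at this ⊢; linarith
      · have := hx.2; push_cast at this ⊢; linarith
    exact ⟨ae_of_all _ hpt, fun _ => hpt⟩

lemma coeff_psi (a b : ℝ) (hh : 0 < h) (m : ℤ) :
    ∀ k : ℕ, coeff (psi a b h k) m = (D h m)^k * coeff (chi a b) m
  | 0 => by rw [pow_zero, one_mul]; rfl
  | (k+1) => by
    obtain ⟨hm, hi, h0, h1, hp⟩ := psi_pack a b hh k
    have : coeff (psi a b h (k+1)) m = D h m * coeff (psi a b h k) m :=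
      coeff_sm hh hm h0 h1 hp m
    rw [this, coeff_psi a b hh m k, pow_succ]
    ring


lemma fourier_eq (m : ℤ) (x : ℝ) : @fourier 1 m ((x : ℝ) : AddCircle (1:ℝ)) = e ((m:ℝ) * x) := by
  rw [fourier_coe_apply, e_eq_exp]
  congr 1
  push_cast
  ring

lemma psi_expansion (a b : ℝ) (hh : 0 < h) (k : ℕ)
    (hsum : Summable (fun m : ℤ => coeff (psi a b h (k+1)) m)) (x : ℝ) :
    ((psi a b h (k+1) x : ℝ) : ℂ) = ∑' m : ℤ, coeff (psi a b h (k+1)) m * e ((m:ℝ) * x) := by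
  haveI : Fact ((0:ℝ) < 1) := ⟨one_pos⟩
  set Ψ := psi a b h (k+1) with hΨ
  have hper : Periodic Ψ 1 := (psi_pack a b hh (k+1)).2.2.2.2
  have hcont : Continuous Ψ := psi_continuous a b hh k
  set Ψc : ℝ → ℂ := fun t => ((Ψ t : ℝ) : ℂ) with hΨc
  have hperc : Periodic Ψc 1 := fun t => by simp only [hΨc, hper t]
  have hcontc : Continuous Ψc := Complex.continuous_ofReal.comp hcont
  have hlift : Continuous (hperc.lift) := by
    rw [isQuotientMap_quotient_mk'.continuous_iff]
    exact hcontc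
  set f : C(AddCircle (1:ℝ), ℂ) := ⟨hperc.lift, hlift⟩ with hf
  have hcoeff : ∀ m : ℤ, fourierCoeff (f : AddCircle (1:ℝ) → ℂ) m = coeff Ψ m := by
    intro m
    rw [fourierCoeff_eq_intervalIntegral (f : AddCircle (1:ℝ) → ℂ) m 0]
    rw [show ((1:ℝ)/1) = 1 by norm_num, one_smul, zero_add]
    unfold coeff
    apply intervalIntegral.integral_congr
    intro t _
    beta_reduce
    rw [smul_eq_mul]
    have h1 : (f : AddCircle (1:ℝ) → ℂ) ((t : ℝ) : AddCircle (1:ℝ)) = Ψc t := hperc.lift_coe t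
    rw [h1, fourier_eq (-m) t]
    congr 2
    push_cast
    ring
  have hsum' : Summable (fourierCoeff (f : AddCircle (1:ℝ) → ℂ)) := by
    rw [show fourierCoeff (f : AddCircle (1:ℝ) → ℂ) = fun m => coeff Ψ m from funext hcoeff]
    exact hsum
  have hs : HasSum (fun i => fourierCoeff (f : AddCircle (1:ℝ) → ℂ) i • fourier i) f :=
    hasSum_fourier_series_of_summable hsum'
  have hx := hs.mapL (ContinuousMap.evalCLM ℂ ((x : ℝ) : AddCircle (1:ℝ)))
  have hev : ∀ g : C(AddCircle (1:ℝ), ℂ),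
      ContinuousMap.evalCLM ℂ ((x : ℝ) : AddCircle (1:ℝ)) g = g ((x : ℝ) : AddCircle (1:ℝ)) := fun g => rfl
  simp only [hev] at hx
  have hx2 : HasSum (fun i : ℤ => coeff Ψ i * e ((i:ℝ) * x)) (Ψc x) := by
    convert hx using 2 with i
    rw [ContinuousMap.smul_apply, smul_eq_mul, hcoeff i,
        show ((fourier i : C(AddCircle (1:ℝ), ℂ)) ((x : ℝ) : AddCircle (1:ℝ))) = e ((i:ℝ)*x) from fourier_eq i x]
    exact (hperc.lift_coe x).symm
  exact hx2.tsum_eq.symm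

end Vino


theorem stmt5 (r : ℕ) (hr : 0 < r) (a b Δ : ℝ) (hΔ0 : 0 < Δ) (hΔ : Δ < 1/2)
    (h1 : Δ ≤ b - a) (h2 : b - a ≤ 1 - Δ) :
    ∃ (Ψ : ℝ → ℝ) (c : ℤ → ℂ),
      (∀ x, Ψ (x + 1) = Ψ x) ∧
      (∀ x, a + Δ/2 ≤ x → x ≤ b - Δ/2 → Ψ x = 1) ∧
      (∀ x, b + Δ/2 ≤ x → x ≤ 1 + a - Δ/2 → Ψ x = 0) ∧
      (∀ x, 0 ≤ Ψ x ∧ Ψ x ≤ 1) ∧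
      (∀ x, (Ψ x : ℂ) = ∑' m : ℤ, c m * e (m * x)) ∧
      c 0 = ((b - a : ℝ) : ℂ) ∧
      (∀ m, ‖c m‖ ≤ 2 * (b - a)) ∧
      (∀ m : ℤ, m ≠ 0 → ‖c m‖ ≤ 2 / (Real.pi * |(m : ℝ)|)) ∧
      (∀ m : ℤ, m ≠ 0 →
        ‖c m‖ ≤ 2 / (Real.pi * |(m : ℝ)|) * ((r : ℝ) / (Real.pi * |(m : ℝ)| * Δ)) ^ r) := by
  have hπ := Real.pi_pos
  have hr0 : (0:ℝ) < r := by exact_mod_cast hr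
  set h : ℝ := Δ/(2*r) with hhdef
  have hh : 0 < h := by positivity
  have hab0 : 0 < b - a := lt_of_lt_of_le hΔ0 h1
  have hab1 : b - a < 1 := by linarith
  have hrh : (r:ℝ) * h = Δ/2 := by rw [hhdef]; field_simp
  obtain ⟨k, hk⟩ : ∃ k, r = k + 1 := ⟨r - 1, (Nat.succ_pred_eq_of_pos hr).symm⟩
  have hc3 : ∀ m : ℤ, m ≠ 0 → ‖Vino.coeff (Vino.psi a b h r) m‖ ≤
      2 / (Real.pi * |(m:ℝ)|) * ((r:ℝ)/(Real.pi * |(m:ℝ)| * Δ))^r := by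
    intro m hm
    have hmpos : (0:ℝ) < |(m:ℝ)| := by simp only [abs_pos]; exact_mod_cast hm
    have hDb : ‖Vino.D h m‖ ≤ (r:ℝ)/(Real.pi * |(m:ℝ)| * Δ) := by
      have key := Vino.D_norm_le hh hm
      have heq : 1/(2*h) * (1/(Real.pi * |(m:ℝ)|)) = (r:ℝ)/(Real.pi * |(m:ℝ)| * Δ) := by
        rw [hhdef]
        field_simp
      rwa [heq] at key
    rw [Vino.coeff_psi a b hh m r, norm_mul, norm_pow]
    calc ‖Vino.D h m‖^r * ‖Vino.coeff (Vino.chi a b) m‖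
        ≤ ((r:ℝ)/(Real.pi * |(m:ℝ)| * Δ))^r * (1/(Real.pi * |(m:ℝ)|)) :=
          mul_le_mul (pow_le_pow_left₀ (norm_nonneg _) hDb r)
            (Vino.coeff_chi_norm_le' hab0 hab1 hm) (norm_nonneg _) (by positivity)
      _ ≤ ((r:ℝ)/(Real.pi * |(m:ℝ)| * Δ))^r * (2/(Real.pi * |(m:ℝ)|)) :=
          mul_le_mul_of_nonneg_left ((div_le_div_iff_of_pos_right (by positivity)).mpr one_le_two)
            (by positivity)
      _ = 2 / (Real.pi * |(m:ℝ)|) * ((r:ℝ)/(Real.pi * |(m:ℝ)| * Δ))^r := by ring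
  have hbound : ∀ m : ℤ, m ≠ 0 → ‖Vino.coeff (Vino.psi a b h r) m‖ ≤
      (2/Real.pi * ((r:ℝ)/(Real.pi*Δ))^r) * (1/(m:ℝ)^2) := by
    intro m hm
    have hmpos : (0:ℝ) < |(m:ℝ)| := by simp only [abs_pos]; exact_mod_cast hm
    have hm1 : (1:ℝ) ≤ |(m:ℝ)| := by
      have := Int.one_le_abs hm
      calc (1:ℝ) ≤ ((|m| : ℤ) : ℝ) := by exact_mod_cast this
        _ = |(m:ℝ)| := by push_cast; ring
    have hkey : (r:ℝ)/(Real.pi * |(m:ℝ)| * Δ) = ((r:ℝ)/(Real.pi*Δ)) * (1/|(m:ℝ)|) := by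
      field_simp
    calc ‖Vino.coeff (Vino.psi a b h r) m‖
        ≤ 2 / (Real.pi * |(m:ℝ)|) * ((r:ℝ)/(Real.pi * |(m:ℝ)| * Δ))^r := hc3 m hm
      _ = 2/Real.pi * (1/|(m:ℝ)|) * (((r:ℝ)/(Real.pi*Δ))^r * (1/|(m:ℝ)|)^r) := by
          rw [hkey, mul_pow]; ring
      _ ≤ 2/Real.pi * (1/|(m:ℝ)|) * (((r:ℝ)/(Real.pi*Δ))^r * (1/|(m:ℝ)|)) := by
          apply mul_le_mul_of_nonneg_left _ (by positivity)
          apply mul_le_mul_of_nonneg_left _ (by positivity)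
          exact pow_le_of_le_one (by positivity) ((div_le_one hmpos).mpr hm1) hr.ne'
      _ = (2/Real.pi * ((r:ℝ)/(Real.pi*Δ))^r) * (1/(m:ℝ)^2) := by
          rw [show ((m:ℝ))^2 = |(m:ℝ)|^2 from (sq_abs _).symm]; ring
  have hsum : Summable (fun m : ℤ => Vino.coeff (Vino.psi a b h r) m) := by
    apply Summable.of_norm_bounded_eventually
      (g := fun m : ℤ => (2/Real.pi * ((r:ℝ)/(Real.pi*Δ))^r) * (1/(m:ℝ)^2))
    · exact (Real.summable_one_div_int_pow.mpr one_lt_two).mul_left _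
    · rw [Filter.eventually_cofinite]
      apply Set.Finite.subset (Set.finite_singleton (0:ℤ))
      intro m hm
      simp only [Set.mem_setOf_eq, Set.mem_singleton_iff] at *
      by_contra hm0
      exact hm (hbound m hm0)
  refine ⟨Vino.psi a b h r, fun m => Vino.coeff (Vino.psi a b h r) m, ?_, ?_, ?_, ?_, ?_, ?_, ?_, ?_, ?_⟩
  · exact fun x => (Vino.psi_pack a b hh r).2.2.2.2 x
  · intro x hx1 hx2
    exact (Vino.psi_one hh hab1 r).2 hr x ⟨by rw [hrh]; linarith, by rw [hrh]; linarith⟩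
  · intro x hx1 hx2
    exact (Vino.psi_zero hh hab0 r).2 hr x ⟨by rw [hrh]; linarith, by rw [hrh]; linarith⟩
  · exact fun x => ⟨(Vino.psi_pack a b hh r).2.2.1 x, (Vino.psi_pack a b hh r).2.2.2.1 x⟩
  · -- Fourier expansion
    intro x
    rw [hk] at hsum ⊢
    exact Vino.psi_expansion a b hh k hsum x
  · beta_reduce
    rw [Vino.coeff_psi a b hh 0 r, Vino.D_zero hh, one_pow, one_mul,
      Vino.coeff_chi_zero hab0 hab1]
  · -- |c m| ≤ 2(b-a)
    intro m
    beta_reduce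
    rw [Vino.coeff_psi a b hh m r, norm_mul, norm_pow]
    calc ‖Vino.D h m‖^r * ‖Vino.coeff (Vino.chi a b) m‖ ≤ 1^r * (b - a) :=
          mul_le_mul (pow_le_pow_left₀ (norm_nonneg _) (Vino.D_norm_le_one hh m) r)
            (Vino.coeff_chi_norm_le hab0 hab1 m) (norm_nonneg _) (by positivity)
      _ ≤ 2 * (b - a) := by rw [one_pow, one_mul]; linarith
  · -- |c m| ≤ 2/(π|m|)
    intro m hm
    have hmpos : (0:ℝ) < |(m:ℝ)| := by simp only [abs_pos]; exact_mod_cast hm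
    beta_reduce
    rw [Vino.coeff_psi a b hh m r, norm_mul, norm_pow]
    calc ‖Vino.D h m‖^r * ‖Vino.coeff (Vino.chi a b) m‖ ≤ 1^r * (1/(Real.pi * |(m:ℝ)|)) :=
          mul_le_mul (pow_le_pow_left₀ (norm_nonneg _) (Vino.D_norm_le_one hh m) r)
            (Vino.coeff_chi_norm_le' hab0 hab1 hm) (norm_nonneg _) (by positivity)
      _ ≤ 2 / (Real.pi * |(m:ℝ)|) := by
          rw [one_pow, one_mul]
          exact (div_le_div_iff_of_pos_right (by positivity)).mpr one_le_two
  · -- decay bound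
    exact hc3
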